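/- If u*v is a term in the product m'(ρ⊗σ) of two permutations in (MPR,m') (i.e., st(u)=ρ, st(v)=σ, supp(u)∪supp(v)={1,...,m+n}), then its descent set is either desc(ρ) ∪ (m + desc(σ)) or desc(ρ) ∪ {m} ∪ (m + desc(σ)), and both possibilities occur among the summands. -/

import Mathlib

/-- Standardization of an injective word: each letter is replaced by its rank. -/
def stdz (w : List ℕ) : List ℕ := w.map (fun a => w.countP (fun b => b ≤ a))

/-- `w` is a permutation word: a rearrangement of `[1,…,n]` where `n` is its length. -/
def IsPermWord (w : List ℕ) : Prop := w.Perm (List.range' 1 w.length)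

/-- The descent set of a word `[s₁,…,sₘ]` : those `i ∈ {1,…,m−1}` with `sᵢ > s_{i+1}`. -/
def descSet (w : List ℕ) : Finset ℕ :=
  (Finset.Ioo 0 w.length).filter (fun i => w.getD i 0 < w.getD (i - 1) 0)


lemma stdz_length (w : List ℕ) : (stdz w).length = w.length := by simp [stdz]

lemma countP_le_strict {w : List ℕ} {a b : ℕ} (hb : b ∈ w) (hab : a < b) :
    w.countP (fun x => x ≤ a) < w.countP (fun x => x ≤ b) := by
  have h1 : w.countP (fun x => x ≤ a) = (w.filter (fun x => x ≤ b)).countP (fun x => x ≤ a) := by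
    rw [List.countP_filter]
    apply List.countP_congr
    intro x _
    simp only [decide_eq_true_eq, Bool.and_eq_true]
    omega
  rw [h1, List.countP_eq_length_filter, ← List.countP_eq_length_filter,
    List.countP_eq_length_filter (p := fun x => x ≤ b)]
  rw [List.countP_eq_length_filter]
  apply List.length_filter_lt_length_iff_exists.2
  exact ⟨b, List.mem_filter.2 ⟨hb, by simp⟩, by simp; omega⟩

lemma stdz_lt_iff {w : List ℕ} {a b : ℕ} (ha : a ∈ w) (hb : b ∈ w) :
    w.countP (fun x => x ≤ a) < w.countP (fun x => x ≤ b) ↔ a < b := by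
  constructor
  · intro h
    by_contra hab
    push_neg at hab
    rcases eq_or_lt_of_le hab with rfl | hlt
    · omega
    · exact absurd (countP_le_strict ha hlt) (by omega)
  · exact countP_le_strict hb

lemma descSet_stdz (w : List ℕ) : descSet (stdz w) = descSet w := by
  unfold descSet
  rw [stdz_length]
  apply Finset.filter_congr
  intro i hi
  simp only [Finset.mem_Ioo] at hi
  have hi1 : i - 1 < w.length := by omega
  rw [List.getD_eq_getElem _ _ (by rw [stdz_length]; exact hi.2),
      List.getD_eq_getElem _ _ (by rw [stdz_length]; exact hi1),
      List.getD_eq_getElem _ _ hi.2, List.getD_eq_getElem _ _ hi1]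
  simp only [stdz, List.getElem_map]
  exact stdz_lt_iff (w.getElem_mem _) (w.getElem_mem _)

lemma stdz_of_permWord {w : List ℕ} (hw : IsPermWord w) : stdz w = w := by
  have key : ∀ a ∈ w, w.countP (fun b => b ≤ a) = a := by
    intro a ha
    have ha' : a ∈ List.range' 1 w.length := hw.mem_iff.1 ha
    rw [List.mem_range'] at ha'
    rw [hw.countP_eq]
    have hsplit : List.range' 1 w.length = List.range' 1 a ++ List.range' (1 + a) (w.length - a) := by
      rw [List.range'_append_1]
      congr 1
      omega
    rw [hsplit, List.countP_append]
    have h1 : (List.range' 1 a).countP (fun b => b ≤ a) = a := by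
      rw [List.countP_eq_length.2]
      · simp
      · intro x hx
        rw [List.mem_range'] at hx
        simp; omega
    have h2 : (List.range' (1 + a) (w.length - a)).countP (fun b => b ≤ a) = 0 := by
      rw [List.countP_eq_zero.2]
      intro x hx
      rw [List.mem_range'] at hx
      simp; omega
    omega
  unfold stdz
  calc w.map (fun a => w.countP (fun b => b ≤ a)) = w.map id :=
        List.map_congr_left (fun a ha => key a ha)
    _ = w := List.map_id w

lemma stdz_shift (w : List ℕ) (k : ℕ) : stdz (w.map (· + k)) = stdz w := by
  unfold stdz
  rw [List.map_map]
  apply List.map_congr_left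
  intro a _
  simp only [Function.comp]
  rw [List.countP_map]
  apply List.countP_congr
  intro x _
  simp only [Function.comp, decide_eq_true_eq]
  omega

lemma descSet_append (u v : List ℕ) (hu : u ≠ []) (hv : v ≠ []) :
    descSet (u ++ v) = descSet u ∪ (descSet v).image (u.length + ·) ∪
      (if v.getD 0 0 < u.getD (u.length - 1) 0 then {u.length} else (∅ : Finset ℕ)) := by
  have hum : 0 < u.length := List.length_pos_iff.2 hu
  have hvn : 0 < v.length := List.length_pos_iff.2 hv
  ext i
  simp only [descSet, Finset.mem_union, Finset.mem_filter, Finset.mem_Ioo, Finset.mem_image,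
    List.length_append]
  rcases lt_trichotomy i u.length with hlt | heq | hgt
  · rw [List.getD_append _ _ _ _ (by omega : i - 1 < u.length)]
    by_cases hi0 : 0 < i
    · rw [List.getD_append _ _ _ _ hlt]
      constructor
      · intro h
        exact Or.inl (Or.inl ⟨⟨hi0, hlt⟩, h.2⟩)
      · rintro ((⟨⟨_, _⟩, h⟩ | ⟨j, ⟨⟨hj0, _⟩, _⟩, hji⟩) | hmem)
        · exact ⟨⟨hi0, by omega⟩, h⟩
        · omega
        · split at hmem
          · simp at hmem; omega
          · simp at hmem
    · constructor
      · intro h; omega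
      · rintro ((⟨⟨h0, _⟩, _⟩ | ⟨j, ⟨⟨hj0, _⟩, _⟩, hji⟩) | hmem)
        · omega
        · omega
        · split at hmem
          · simp at hmem; omega
          · simp at hmem
  · subst heq
    rw [List.getD_append_right _ _ _ _ (le_refl _), Nat.sub_self,
      List.getD_append _ _ _ _ (by omega : u.length - 1 < u.length)]
    constructor
    · intro h
      right
      rw [if_pos h.2]
      simp
    · rintro ((⟨⟨_, h⟩, _⟩ | ⟨j, ⟨⟨hj0, _⟩, _⟩, hji⟩) | hmem)
      · omega
      · omega
      · split at hmem
        · next hc => exact ⟨⟨hum, by omega⟩, hc⟩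
        · simp at hmem
  · rw [List.getD_append_right _ _ _ _ (by omega : u.length ≤ i),
      List.getD_append_right _ _ _ _ (by omega : u.length ≤ i - 1)]
    have h1 : i - 1 - u.length = i - u.length - 1 := by omega
    rw [h1]
    constructor
    · intro h
      refine Or.inl (Or.inr ⟨i - u.length, ⟨⟨by omega, by omega⟩, h.2⟩, by omega⟩)
    · rintro ((⟨⟨_, h⟩, _⟩ | ⟨j, ⟨⟨hj0, hjn⟩, hjd⟩, hji⟩) | hmem)
      · omega
      · have : j = i - u.length := by omega
        subst this
        exact ⟨⟨by omega, by omega⟩, hjd⟩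
      · split at hmem
        · simp at hmem; omega
        · simp at hmem

lemma permWord_getD {w : List ℕ} (hw : IsPermWord w) {i : ℕ} (hi : i < w.length) :
    1 ≤ w.getD i 0 ∧ w.getD i 0 ≤ w.length := by
  rw [List.getD_eq_getElem _ _ hi]
  have := List.mem_range'.1 (hw.mem_iff.1 (w.getElem_mem hi))
  omega

lemma shift_perm {w : List ℕ} (k : ℕ) (hw : IsPermWord w) :
    (w.map (· + k)).Perm (List.range' (1 + k) w.length) := by
  have h := hw.map (· + k)
  have heq : (List.range' 1 w.length).map (· + k) = List.range' (1 + k) w.length := by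
    rw [Nat.add_comm 1 k, ← List.map_add_range' (a := k) 1 w.length 1]
    apply List.map_congr_left
    intro a _
    omega
  rwa [heq] at h


/-- If `u*v` is a term of `m'(ρ⊗σ)` (i.e. `st(u) = ρ`, `st(v) = σ`, and `u*v` uses each
letter of `{1,…,m+n}` once), then `desc(u*v)` is either `desc(ρ) ∪ (m + desc(σ))` or
`desc(ρ) ∪ {m} ∪ (m + desc(σ))`, and both possibilities occur among the summands. -/
theorem stmt12 (ρ σ : List ℕ) (hρ : IsPermWord ρ) (hσ : IsPermWord σ)
    (hm : 0 < ρ.length) (hn : 0 < σ.length) :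
    (∀ u v : List ℕ, stdz u = ρ → stdz v = σ →
        (u ++ v).Perm (List.range' 1 (ρ.length + σ.length)) →
        descSet (u ++ v) = descSet ρ ∪ (descSet σ).image (ρ.length + ·) ∨
          descSet (u ++ v)
            = insert ρ.length (descSet ρ ∪ (descSet σ).image (ρ.length + ·))) ∧
    (∃ u v : List ℕ, stdz u = ρ ∧ stdz v = σ ∧
        (u ++ v).Perm (List.range' 1 (ρ.length + σ.length)) ∧
        descSet (u ++ v) = descSet ρ ∪ (descSet σ).image (ρ.length + ·)) ∧
    (∃ u v : List ℕ, stdz u = ρ ∧ stdz v = σ ∧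
        (u ++ v).Perm (List.range' 1 (ρ.length + σ.length)) ∧
        descSet (u ++ v)
          = insert ρ.length (descSet ρ ∪ (descSet σ).image (ρ.length + ·))) := by
  have key : ∀ u v : List ℕ, stdz u = ρ → stdz v = σ →
      descSet (u ++ v) = descSet ρ ∪ (descSet σ).image (ρ.length + ·) ∪
        (if v.getD 0 0 < u.getD (u.length - 1) 0 then {ρ.length} else (∅ : Finset ℕ)) := by
    intro u v hu hv
    have hul : u.length = ρ.length := by rw [← hu, stdz_length]
    have hvl : v.length = σ.length := by rw [← hv, stdz_length]
    have hune : u ≠ [] := by intro h; subst h; simp at hul; omega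
    have hvne : v ≠ [] := by intro h; subst h; simp at hvl; omega
    have hdu : descSet u = descSet ρ := by rw [← hu, descSet_stdz]
    have hdv : descSet v = descSet σ := by rw [← hv, descSet_stdz]
    rw [descSet_append u v hune hvne, hdu, hdv, hul]
  refine ⟨?_, ?_, ?_⟩
  · intro u v hu hv _
    rw [key u v hu hv]
    split
    · right
      rw [Finset.union_comm, ← Finset.insert_eq]
    · left
      rw [Finset.union_empty]
  · refine ⟨ρ, σ.map (· + ρ.length), stdz_of_permWord hρ, ?_, ?_, ?_⟩
    · rw [stdz_shift, stdz_of_permWord hσ]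
    · have h1 := hρ
      have h2 := shift_perm ρ.length hσ
      have hr : List.range' 1 ρ.length ++ List.range' (1 + ρ.length) σ.length
          = List.range' 1 (ρ.length + σ.length) := by
        rw [List.range'_append_1, Nat.add_comm]
      exact hr ▸ h1.append h2
    · rw [key _ _ (stdz_of_permWord hρ) (by rw [stdz_shift, stdz_of_permWord hσ])]
      rw [if_neg, Finset.union_empty]
      have hb1 := (permWord_getD hρ (i := ρ.length - 1) (by omega)).2
      have hb2 := (permWord_getD hσ (i := 0) hn).1
      have : (σ.map (· + ρ.length)).getD 0 0 = σ.getD 0 0 + ρ.length := by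
        rw [List.getD_eq_getElem _ _ (by simpa using hn), List.getD_eq_getElem _ _ hn,
          List.getElem_map]
      rw [this]
      omega
  · refine ⟨ρ.map (· + σ.length), σ, ?_, stdz_of_permWord hσ, ?_, ?_⟩
    · rw [stdz_shift, stdz_of_permWord hρ]
    · have h1 := shift_perm σ.length hρ
      have h2 := hσ
      have hr : List.range' 1 σ.length ++ List.range' (1 + σ.length) ρ.length
          = List.range' 1 (ρ.length + σ.length) := by
        rw [List.range'_append_1, Nat.add_comm]
      exact hr ▸ ((h1.append h2).trans List.perm_append_comm)
    · rw [key _ _ (by rw [stdz_shift, stdz_of_permWord hρ]) (stdz_of_permWord hσ)]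
      rw [if_pos, Finset.union_comm _ {ρ.length}, ← Finset.insert_eq]
      have hb1 := (permWord_getD hρ (i := ρ.length - 1) (by omega)).1
      have hb2 := (permWord_getD hσ (i := 0) hn).2
      have hlen : (ρ.map (· + σ.length)).length = ρ.length := by simp
      have : (ρ.map (· + σ.length)).getD ((ρ.map (· + σ.length)).length - 1) 0
          = ρ.getD (ρ.length - 1) 0 + σ.length := by
        rw [hlen, List.getD_eq_getElem _ _ (by simpa using (by omega : ρ.length - 1 < ρ.length)),
          List.getD_eq_getElem _ _ (by omega : ρ.length - 1 < ρ.length), List.getElem_map]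
      rw [this]
      omega
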